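/- arXiv:1706.02503 — 3 statements merged into one kernel-verified Lean document; each statement's English description precedes it below -/
import Mathlib

section
/- For every real k and every natural number m: Σ_{j=0}^{2m} (−1)^j (k)_j (k)_{2m−j} / (j! (2m−j)!) = (k)_m / m!. -/
open Real MeasureTheory

/-- Pochhammer symbol `(a)_m = a(a+1)⋯(a+m-1)`. -/
noncomputable def poch (a : ℝ) (m : ℕ) : ℝ := (ascPochhammer ℝ m).eval a

/-- Confluent hypergeometric function `₁F₁(a, c; z)`. -/
noncomputable def oneF1 (a c z : ℝ) : ℝ :=
  ∑' m : ℕ, poch a m / poch c m * z ^ m / (Nat.factorial m)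

/-- Gegenbauer (ultraspherical) polynomial `C_j^{(k)}(x)`. -/
noncomputable def geg (j : ℕ) (k x : ℝ) : ℝ :=
  ∑ l ∈ Finset.range (j / 2 + 1),
    (-1 : ℝ) ^ l * poch k (j - l) / ((Nat.factorial l : ℝ) * (Nat.factorial (j - 2 * l))) *
      (2 * x) ^ (j - 2 * l)

/-- Integral over the standard simplex `Σ_p` in the coordinates `(u_1, …, u_{p-1})`,
with `u_p := 1 - u_1 - ⋯ - u_{p-1}`. -/
noncomputable def simplexIntegral (p : ℕ) (f : (Fin p → ℝ) → ℝ) : ℝ :=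
  ∫ u in {u : Fin (p - 1) → ℝ | (∀ s, 0 ≤ u s) ∧ ∑ s, u s ≤ 1},
    f (fun i => if h : (i : ℕ) < p - 1 then u ⟨i, h⟩ else 1 - ∑ s, u s)

-- auxiliary lemmas

noncomputable def pa (k : ℝ) (j : ℕ) : ℝ := poch k j / (Nat.factorial j : ℝ)
noncomputable def Ssum (k : ℝ) (n : ℕ) : ℝ :=
  ∑ j ∈ Finset.range (n + 1), (-1 : ℝ) ^ j * pa k j * pa k (n - j)
noncomputable def Wsum (k : ℝ) (n : ℕ) : ℝ :=
  ∑ j ∈ Finset.range (n + 1), (-1 : ℝ) ^ j * (j : ℝ) * pa k j * pa k (n - j)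

lemma poch_zero (k : ℝ) : poch k 0 = 1 := by simp [poch]

lemma poch_succ (k : ℝ) (j : ℕ) : poch k (j + 1) = poch k j * (k + j) := by
  simp [poch, ascPochhammer_succ_eval]

lemma pa_zero (k : ℝ) : pa k 0 = 1 := by simp [pa, poch_zero]

lemma pa_succ (k : ℝ) (j : ℕ) : pa k (j + 1) * (j + 1) = pa k j * (k + j) := by
  have hj : (Nat.factorial j : ℝ) ≠ 0 := Nat.cast_ne_zero.mpr (Nat.factorial_ne_zero j)
  have hj1 : ((j:ℝ) + 1) ≠ 0 := by positivity
  simp only [pa, poch_succ, Nat.factorial_succ, Nat.cast_mul, Nat.cast_add, Nat.cast_one]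
  field_simp

lemma neg_one_pow_sub {n j : ℕ} (h : j ≤ n) : (-1 : ℝ) ^ (n - j) = (-1)^n * (-1)^j := by
  have h1 : (-1 : ℝ) ^ (n - j) * (-1)^j = (-1)^n := by
    rw [← pow_add, Nat.sub_add_cancel h]
  have h2 : ((-1 : ℝ)^j) * ((-1)^j) = 1 := by
    rw [← pow_add]; simp [pow_add, ← two_mul, pow_mul]
  calc (-1 : ℝ) ^ (n - j) = (-1 : ℝ) ^ (n - j) * (((-1:ℝ)^j) * ((-1)^j)) := by rw [h2]; ring
    _ = (-1)^n * (-1)^j := by rw [← mul_assoc, h1]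

lemma S_odd (k : ℝ) (t : ℕ) : Ssum k (2 * t + 1) = 0 := by
  set n := 2 * t + 1 with hn
  have hrefl := Finset.sum_range_reflect
    (fun j => (-1 : ℝ) ^ j * pa k j * pa k (n - j)) (n + 1)
  have h2 : Ssum k n = -Ssum k n := by
    conv_lhs => rw [Ssum, ← hrefl]
    rw [Ssum, ← Finset.sum_neg_distrib]
    apply Finset.sum_congr rfl
    intro j hj
    have hj' : j ≤ n := Nat.lt_succ_iff.mp (Finset.mem_range.mp hj)
    rw [Nat.add_sub_cancel, Nat.sub_sub_self hj', neg_one_pow_sub hj']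
    have : (-1 : ℝ)^n = -1 := by rw [hn]; simp [pow_add, pow_mul]
    rw [this]; ring
  linarith

lemma W_even (k : ℝ) (t : ℕ) : 2 * Wsum k (2 * t) = (2 * t : ℝ) * Ssum k (2 * t) := by
  set n := 2 * t with hn
  have hrefl := Finset.sum_range_reflect
    (fun j => (-1 : ℝ) ^ j * (j : ℝ) * pa k j * pa k (n - j)) (n + 1)
  have key : Wsum k n = ∑ j ∈ Finset.range (n + 1),
      (-1 : ℝ) ^ j * ((n : ℝ) - j) * pa k j * pa k (n - j) := by
    conv_lhs => rw [Wsum, ← hrefl]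
    apply Finset.sum_congr rfl
    intro j hj
    have hj' : j ≤ n := Nat.lt_succ_iff.mp (Finset.mem_range.mp hj)
    rw [Nat.add_sub_cancel, Nat.sub_sub_self hj', neg_one_pow_sub hj', Nat.cast_sub hj']
    have : (-1 : ℝ)^n = 1 := by rw [hn]; simp [pow_mul]
    rw [this]; ring
  have h7 : (n : ℝ) * Ssum k n = Wsum k n + Wsum k n := by
    rw [Ssum, Finset.mul_sum]
    nth_rewrite 2 [key]
    rw [Wsum, ← Finset.sum_add_distrib]
    apply Finset.sum_congr rfl
    intro j _; ring
  have hcast : ((n : ℕ) : ℝ) = 2 * (t : ℝ) := by rw [hn]; push_cast; ring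
  rw [hcast] at h7
  linarith

lemma W_succ (k : ℝ) (n : ℕ) : Wsum k (n + 1) = -(k * Ssum k n + Wsum k n) := by
  rw [Wsum, Finset.sum_range_succ']
  simp only [Nat.cast_zero, pow_zero, mul_zero, zero_mul, add_zero]
  rw [Ssum, Wsum, Finset.mul_sum, ← Finset.sum_add_distrib, ← Finset.sum_neg_distrib]
  apply Finset.sum_congr rfl
  intro i hi
  have hs : n + 1 - (i + 1) = n - i := by omega
  have hp := pa_succ k i
  rw [hs]
  push_cast
  linear_combination (-1 : ℝ) ^ i * (-1) * pa k (n - i) * hp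

lemma S_even (k : ℝ) (m : ℕ) : Ssum k (2 * m) = pa k m := by
  induction m with
  | zero => simp [Ssum, pa_zero]
  | succ m ih =>
    have h1 : 2 * (m + 1) = (2 * m + 1) + 1 := by ring
    have h2 := W_succ k (2 * m + 1)
    have h3 := W_succ k (2 * m)
    have h4 := W_even k m
    have h5 := W_even k (m + 1)
    have h6 := S_odd k m
    rw [show 2*m+1+1 = 2*(m+1) by ring] at h2
    -- h2 : Wsum k (2(m+1)) = -(k * Ssum k (2m+1) + Wsum k (2m+1))
    -- h3 : Wsum k (2m+1) = -(k * Ssum k (2m) + Wsum k (2m))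
    -- so Wsum k (2(m+1)) = k * Ssum(2m) + Wsum(2m), and 2*Wsum(2m) = 2m * Ssum(2m)
    -- h5 : 2 * Wsum (2(m+1)) = (2(m+1)) * Ssum (2(m+1))
    have hgoal : (2 * (m:ℝ) + 2) * Ssum k (2 * (m + 1)) = (2*k + 2*m) * Ssum k (2 * m) := by
      have e5 : ((2 * ((m:ℕ) + 1) : ℕ) : ℝ) = 2 * (m:ℝ) + 2 := by push_cast; ring
      have e4 : ((2 * (m:ℕ) : ℕ) : ℝ) = 2 * (m:ℝ) := by push_cast; ring
      push_cast at h4 h5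
      rw [h6] at h2
      linarith
    have hp := pa_succ k m
    have hm1 : (2 * (m:ℝ) + 2) ≠ 0 := by positivity
    rw [ih] at hgoal
    have h7 : (2*(m:ℝ)+2) * Ssum k (2*(m+1)) = (2*(m:ℝ)+2) * pa k (m+1) := by
      linear_combination hgoal - 2 * hp
    exact mul_left_cancel₀ hm1 h7


theorem stmt4 (k : ℝ) (m : ℕ) :
    ∑ j ∈ Finset.range (2 * m + 1),
        (-1 : ℝ) ^ j * poch k j * poch k (2 * m - j) /
          ((Nat.factorial j : ℝ) * (Nat.factorial (2 * m - j) : ℝ)) =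
      poch k m / (Nat.factorial m : ℝ) := by
  have h := S_even k m
  rw [Ssum] at h
  rw [show poch k m / (Nat.factorial m : ℝ) = pa k m from rfl, ← h]
  apply Finset.sum_congr rfl
  intro j _
  have hj : (Nat.factorial j : ℝ) ≠ 0 := Nat.cast_ne_zero.mpr (Nat.factorial_ne_zero j)
  have hj2 : (Nat.factorial (2 * m - j) : ℝ) ≠ 0 := Nat.cast_ne_zero.mpr (Nat.factorial_ne_zero _)
  rw [pa, pa]
  field_simp
end

section
/- Let n ≥ 3 be an integer, k > 0, and Φ : ℝ → ℝ a continuous function. Then ∫_{Σ_n} (Π_{s=1}^n u_s^{k−1}) Φ(Σ_{s=1}^n u_s cos(π/(2n) + 2sπ/n)) du_1⋯du_{n−1} = ∫_{Σ_n} (Π_{s=1}^n u_s^{k−1}) Φ(Σ_{s=1}^n u_s cos(π/(2n) − (2s−1)π/n)) du_1⋯du_{n−1}. -/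
open Real MeasureTheory

namespace Stmt13Aux
variable (m : ℕ)

def S : Set (Fin m → ℝ) := {u | (∀ s, 0 ≤ u s) ∧ ∑ s, u s ≤ 1}

noncomputable def extF (u : Fin m → ℝ) : Fin (m+1) → ℝ :=
  fun i => if h : (i : ℕ) < m then u ⟨i, h⟩ else 1 - ∑ s, u s

variable {m}

lemma extF_castSucc (u : Fin m → ℝ) (j : Fin m) : extF m u (Fin.castSucc j) = u j := by
  simp [extF, j.isLt]

lemma extF_last (u : Fin m → ℝ) : extF m u (Fin.last m) = 1 - ∑ s, u s := by
  simp [extF]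

lemma extF_of_ne (u : Fin m → ℝ) {i : Fin (m+1)} (h : i ≠ Fin.last m) :
    extF m u i = u (i.castPred h) := by
  simp [extF, Fin.val_lt_last h]
  rfl

-- the swap-with-last map
noncomputable def Tj (j : Fin m) : (Fin m → ℝ) → (Fin m → ℝ) :=
  fun u => Function.update u j (1 - ∑ s, u s)

lemma sum_Tj (j : Fin m) (u : Fin m → ℝ) : ∑ s, Tj j u s = 1 - u j := by
  rw [Tj, Finset.sum_update_of_mem (Finset.mem_univ j)]
  rw [Finset.sdiff_singleton_eq_erase, Finset.sum_erase_eq_sub (Finset.mem_univ j)]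
  ring

lemma Tj_invol (j : Fin m) : Function.Involutive (Tj j) := by
  intro u
  funext i
  by_cases h : i = j
  · subst h
    show Function.update (Tj i u) i (1 - ∑ s, Tj i u s) i = u i
    rw [Function.update_self, sum_Tj]
    ring
  · simp [Tj, Function.update_apply, h]

end Stmt13Aux

namespace Stmt13Aux
variable {m : ℕ}

noncomputable def Lj (j : Fin m) : (Fin m → ℝ) →ₗ[ℝ] (Fin m → ℝ) where
  toFun := fun u i => if i = j then -∑ s, u s else u i
  map_add' := by
    intro u v
    funext i
    by_cases h : i = j <;> simp [h, Finset.sum_add_distrib] <;> ring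
  map_smul' := by
    intro c u
    funext i
    by_cases h : i = j <;> simp [h, Finset.mul_sum]

lemma Tj_eq (j : Fin m) :
    Tj j = fun u => Lj j u + fun i => if i = j then (1:ℝ) else 0 := by
  funext u i
  by_cases h : i = j
  · subst h
    show Function.update u i (1 - ∑ s, u s) i = _
    rw [Function.update_self]
    simp [Lj]
    ring
  · simp [Tj, Lj, Function.update_apply, h]

lemma Lj_comp (j : Fin m) : (Lj j).comp (Lj j) = LinearMap.id := by
  apply LinearMap.ext
  intro u
  funext i
  by_cases h : i = j
  · subst h
    show (if i = i then -∑ s, Lj i u s else _) = u i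
    rw [if_pos rfl]
    have h2 : (fun s => if s = i then -∑ t, u t else u s) = Function.update u i (-∑ t, u t) := by
      funext s; simp [Function.update_apply]
    have h1 : ∑ s, Lj i u s = (-∑ s, u s) + (∑ s, u s - u i) := by
      show ∑ s, (if s = i then -∑ s, u s else u s) = _
      rw [h2, Finset.sum_update_of_mem (Finset.mem_univ i), Finset.sdiff_singleton_eq_erase,
        Finset.sum_erase_eq_sub (Finset.mem_univ i)]
    rw [h1]
    ring
  · simp [Lj, h]

end Stmt13Aux

namespace Stmt13Aux
variable {m : ℕ}

lemma Lj_det (j : Fin m) : |LinearMap.det (Lj j)| = 1 := by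
  have h : LinearMap.det (Lj j) * LinearMap.det (Lj j) = 1 := by
    rw [← LinearMap.det_comp, Lj_comp, LinearMap.det_id]
  rcases mul_self_eq_one_iff.mp h with h' | h' <;> rw [h'] <;> norm_num

lemma Tj_cont (j : Fin m) : Continuous (Tj j) := by
  rw [Tj_eq]
  exact ((Lj j).continuous_on_pi).add continuous_const

lemma Tj_measurePreserving (j : Fin m) :
    MeasurePreserving (Tj j) (volume : Measure (Fin m → ℝ)) volume := by
  refine ⟨(Tj_cont j).measurable, ?_⟩
  have hdet : LinearMap.det (Lj j) ≠ 0 := by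
    intro h
    have := Lj_det j
    rw [h] at this
    simp at this
  have h1 : Measure.map (Lj j) volume = volume := by
    rw [Real.map_linearMap_volume_pi_eq_smul_volume_pi hdet, abs_inv, Lj_det j]
    simp
  have h2 : Tj j = (fun x : Fin m → ℝ => x + fun i => if i = j then (1:ℝ) else 0) ∘ (Lj j) :=
    Tj_eq j
  rw [h2, ← Measure.map_map (measurable_add_const _) ((Lj j).continuous_on_pi).measurable,
    h1, map_add_right_eq_self]

noncomputable def TjE (j : Fin m) : (Fin m → ℝ) ≃ᵐ (Fin m → ℝ) where
  toEquiv := Function.Involutive.toPerm _ (Tj_invol j)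
  measurable_toFun := (Tj_cont j).measurable
  measurable_invFun := (Tj_cont j).measurable

lemma Tj_mem_S {j : Fin m} {u : Fin m → ℝ} (hu : u ∈ S m) : Tj j u ∈ S m := by
  obtain ⟨h1, h2⟩ := hu
  constructor
  · intro s
    by_cases h : s = j
    · subst h
      show 0 ≤ Function.update u s (1 - ∑ t, u t) s
      rw [Function.update_self]
      linarith
    · show 0 ≤ Function.update u j (1 - ∑ t, u t) s
      rw [Function.update_of_ne h]
      exact h1 s
  · rw [sum_Tj]
    have := h1 j
    linarith

lemma Tj_preimage_S (j : Fin m) : Tj j ⁻¹' (S m) = S m := by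
  ext u
  constructor
  · intro h
    have := Tj_mem_S (j := j) h
    rwa [Tj_invol j u] at this
  · exact fun h => Tj_mem_S h

lemma extF_Tj (j : Fin m) (u : Fin m → ℝ) :
    extF m (Tj j u) = extF m u ∘ Equiv.swap (Fin.castSucc j) (Fin.last m) := by
  funext i
  induction i using Fin.lastCases with
  | last =>
    show extF m (Tj j u) (Fin.last m) = extF m u (Equiv.swap _ _ (Fin.last m))
    rw [extF_last, sum_Tj, Equiv.swap_apply_right, extF_castSucc]
    ring
  | cast l =>
    show extF m (Tj j u) (Fin.castSucc l) = extF m u (Equiv.swap _ _ (Fin.castSucc l))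
    by_cases h : l = j
    · subst h
      rw [extF_castSucc, Equiv.swap_apply_left, extF_last]
      show Function.update u l (1 - ∑ t, u t) l = _
      rw [Function.update_self]
    · rw [extF_castSucc, Equiv.swap_apply_of_ne_of_ne
        (fun hc => h (Fin.castSucc_injective m hc)) (Fin.castSucc_lt_last l).ne,
        extF_castSucc]
      show Function.update u j (1 - ∑ t, u t) l = u l
      rw [Function.update_of_ne h]

lemma lemmaB (j : Fin m) (G : (Fin (m+1) → ℝ) → ℝ) :
    (∫ u in S m, G (extF m u ∘ Equiv.swap (Fin.castSucc j) (Fin.last m))) =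
      ∫ u in S m, G (extF m u) := by
  have : ∀ u, G (extF m u ∘ Equiv.swap (Fin.castSucc j) (Fin.last m)) = G (extF m (Tj j u)) :=
    fun u => by rw [extF_Tj]
  simp_rw [this]
  have := (Tj_measurePreserving j).setIntegral_preimage_emb
    (TjE j).measurableEmbedding (fun w => G (extF m w)) (S m)
  rw [Tj_preimage_S] at this
  exact this

end Stmt13Aux

namespace Stmt13Aux
variable {m : ℕ}

def restrictPerm (τ : Equiv.Perm (Fin (m+1))) (hτ : τ (Fin.last m) = Fin.last m) :
    Fin m ≃ Fin m where
  toFun := fun j => (τ (Fin.castSucc j)).castPred (fun h => by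
    have := τ.injective (h.trans hτ.symm)
    exact (Fin.castSucc_lt_last j).ne this)
  invFun := fun j => (τ.symm (Fin.castSucc j)).castPred (fun h => by
    have : Fin.castSucc j = τ (Fin.last m) := by rw [← h, Equiv.apply_symm_apply]
    rw [hτ] at this
    exact (Fin.castSucc_lt_last j).ne this.symm.symm)
  left_inv := fun j => by
    simp [Fin.castSucc_castPred]
  right_inv := fun j => by
    simp [Fin.castSucc_castPred]

lemma extF_restrictPerm (τ : Equiv.Perm (Fin (m+1))) (hτ : τ (Fin.last m) = Fin.last m)
    (u : Fin m → ℝ) : extF m (u ∘ restrictPerm τ hτ) = extF m u ∘ τ := by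
  funext i
  induction i using Fin.lastCases with
  | last =>
    show extF m (u ∘ restrictPerm τ hτ) (Fin.last m) = extF m u (τ (Fin.last m))
    rw [hτ, extF_last, extF_last]
    have : ∑ s, (u ∘ restrictPerm τ hτ) s = ∑ s, u s := by
      simp only [Function.comp_apply]
      exact Equiv.sum_comp (restrictPerm τ hτ) u
    rw [this]
  | cast l =>
    show extF m (u ∘ restrictPerm τ hτ) (Fin.castSucc l) = extF m u (τ (Fin.castSucc l))
    rw [extF_castSucc]
    have hne : τ (Fin.castSucc l) ≠ Fin.last m := fun h => by
      have := τ.injective (h.trans hτ.symm)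
      exact (Fin.castSucc_lt_last l).ne this
    rw [extF_of_ne u hne]
    rfl

lemma lemmaA (τ : Equiv.Perm (Fin (m+1))) (hτ : τ (Fin.last m) = Fin.last m)
    (G : (Fin (m+1) → ℝ) → ℝ) :
    (∫ u in S m, G (extF m u ∘ τ)) = ∫ u in S m, G (extF m u) := by
  set e := restrictPerm τ hτ with he
  have hEapp : ∀ u : Fin m → ℝ,
      (MeasurableEquiv.piCongrLeft (fun _ : Fin m => ℝ) e.symm) u = u ∘ e := by
    intro u
    funext b
    have h := Equiv.piCongrLeft_apply_apply (fun _ : Fin m => ℝ) e.symm u (e b)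
    rw [Equiv.symm_apply_apply] at h
    exact h
  have hpre : (MeasurableEquiv.piCongrLeft (fun _ : Fin m => ℝ) e.symm) ⁻¹' (S m) = S m := by
    ext u
    show (MeasurableEquiv.piCongrLeft (fun _ : Fin m => ℝ) e.symm) u ∈ S m ↔ u ∈ S m
    rw [hEapp]
    constructor
    · rintro ⟨h1, h2⟩
      simp only [Function.comp_apply] at h1 h2
      refine ⟨fun s => by simpa using h1 (e.symm s), ?_⟩
      rwa [Equiv.sum_comp e u] at h2
    · rintro ⟨h1, h2⟩
      refine ⟨fun s => h1 (e s), ?_⟩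
      simp only [Function.comp_apply]
      rwa [Equiv.sum_comp e u]
  have key := (volume_measurePreserving_piCongrLeft (fun _ : Fin m => ℝ) e.symm
    ).setIntegral_preimage_emb
    (MeasurableEquiv.piCongrLeft (fun _ : Fin m => ℝ) e.symm).measurableEmbedding
    (fun w => G (extF m w)) (S m)
  rw [hpre] at key
  have hfun : ∀ u : Fin m → ℝ, G (extF m u ∘ τ) =
      G (extF m ((MeasurableEquiv.piCongrLeft (fun _ : Fin m => ℝ) e.symm) u)) := fun u => by
    rw [hEapp, extF_restrictPerm]
  calc (∫ u in S m, G (extF m u ∘ τ))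
      = ∫ u in S m, G (extF m ((MeasurableEquiv.piCongrLeft (fun _ : Fin m => ℝ) e.symm) u)) :=
        integral_congr_ae (Filter.Eventually.of_forall hfun)
    _ = ∫ u in S m, G (extF m u) := key

end Stmt13Aux

namespace Stmt13Aux
variable {m : ℕ}

lemma swap_base (x y : Fin (m+1)) (G : (Fin (m+1) → ℝ) → ℝ) :
    (∫ u in S m, G (extF m u ∘ Equiv.swap x y)) = ∫ u in S m, G (extF m u) := by
  by_cases hx : x = Fin.last m
  · subst hx
    by_cases hy : y = Fin.last m
    · subst hy
      simp [Equiv.swap_self]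
    · rw [Equiv.swap_comm]
      have : y = Fin.castSucc (y.castPred hy) := (Fin.castSucc_castPred y hy).symm
      rw [this]
      exact lemmaB (y.castPred hy) G
  · by_cases hy : y = Fin.last m
    · subst hy
      have : x = Fin.castSucc (x.castPred hx) := (Fin.castSucc_castPred x hx).symm
      rw [this]
      exact lemmaB (x.castPred hx) G
    · exact lemmaA (Equiv.swap x y) (Equiv.swap_apply_of_ne_of_ne (Ne.symm hx) (Ne.symm hy)) G

lemma perm_invariance (σ : Equiv.Perm (Fin (m+1))) :
    ∀ G : (Fin (m+1) → ℝ) → ℝ,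
      (∫ u in S m, G (extF m u ∘ σ)) = ∫ u in S m, G (extF m u) := by
  refine Equiv.Perm.swap_induction_on σ ?_ ?_
  · intro G
    simp only [Equiv.Perm.coe_one, Function.comp_id]
  · intro τ x y hxy ih G
    have h1 : ∀ u : Fin m → ℝ,
        extF m u ∘ ⇑(Equiv.swap x y * τ) = (extF m u ∘ Equiv.swap x y) ∘ τ := fun u => rfl
    simp_rw [h1]
    exact (swap_base x y (fun w => G (w ∘ τ))).trans (ih G)

end Stmt13Aux

namespace Stmt13Aux

lemma cos_shift (m : ℕ) (hm : 2 ≤ m) (t : Fin (m+1)) :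
    Real.cos (Real.pi / (2 * ((m+1 : ℕ) : ℝ)) + 2 * ((t : ℝ) + 1) * Real.pi / ((m+1 : ℕ) : ℝ)) =
    Real.cos (Real.pi / (2 * ((m+1 : ℕ) : ℝ))
      - (2 * (((t + 1 : Fin (m+1)) : ℝ) + 1) - 1) * Real.pi / ((m+1 : ℕ) : ℝ)) := by
  have hM : ((m+1 : ℕ) : ℝ) ≠ 0 := by positivity
  by_cases ht : t = Fin.last m
  · subst ht
    have h1 : ((Fin.last m + 1 : Fin (m+1)) : ℝ) = 0 := by
      rw [Fin.last_add_one]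
      simp
    have h2 : ((Fin.last m : Fin (m+1)) : ℝ) = (m : ℝ) := by simp
    rw [h1, h2]
    rw [show Real.pi / (2 * ((m+1 : ℕ) : ℝ)) + 2 * ((m : ℝ) + 1) * Real.pi / ((m+1 : ℕ) : ℝ)
        = Real.pi / (2 * ((m+1 : ℕ) : ℝ)) + 2 * Real.pi by
      push_cast
      field_simp]
    rw [Real.cos_add_two_pi]
    rw [show Real.pi / (2 * ((m+1 : ℕ) : ℝ)) - (2 * ((0 : ℝ) + 1) - 1) * Real.pi / ((m+1 : ℕ) : ℝ)
        = -(Real.pi / (2 * ((m+1 : ℕ) : ℝ))) by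
      push_cast
      field_simp
      ring]
    rw [Real.cos_neg]
  · have hval : ((t + 1 : Fin (m+1)) : ℝ) = (t : ℝ) + 1 := by
      have := Fin.val_add_one_of_lt (Fin.lt_last_iff_ne_last.mpr ht)
      rw [this]
      push_cast
      ring
    rw [hval]
    rw [show Real.pi / (2 * ((m+1 : ℕ) : ℝ)) - (2 * (((t : ℝ) + 1) + 1) - 1) * Real.pi / ((m+1 : ℕ) : ℝ)
        = -(Real.pi / (2 * ((m+1 : ℕ) : ℝ)) + 2 * ((t : ℝ) + 1) * Real.pi / ((m+1 : ℕ) : ℝ)) by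
      push_cast
      field_simp
      ring]
    rw [Real.cos_neg]

end Stmt13Aux

namespace Stmt13Aux

lemma simplexIntegral_eq (m : ℕ) (f : (Fin (m+1) → ℝ) → ℝ) :
    simplexIntegral (m+1) f = ∫ u in S m, f (extF m u) := rfl

lemma simplexIntegral_comp_perm (m : ℕ) (σ : Equiv.Perm (Fin (m+1)))
    (F : (Fin (m+1) → ℝ) → ℝ) :
    simplexIntegral (m+1) (fun v => F (v ∘ σ)) = simplexIntegral (m+1) F := by
  rw [simplexIntegral_eq, simplexIntegral_eq]
  exact perm_invariance σ F

end Stmt13Aux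


open Stmt13Aux in
theorem stmt13 (n : ℕ) (hn : 3 ≤ n) (k : ℝ) (hk : 0 < k) (Φ : ℝ → ℝ) (hΦ : Continuous Φ) :
    simplexIntegral n (fun u =>
        (∏ s, u s ^ (k - 1)) *
          Φ (∑ s : Fin n, u s * Real.cos (π / (2 * n) + 2 * ((s : ℝ) + 1) * π / n))) =
      simplexIntegral n (fun u =>
        (∏ s, u s ^ (k - 1)) *
          Φ (∑ s : Fin n, u s * Real.cos (π / (2 * n) - (2 * ((s : ℝ) + 1) - 1) * π / n))) := by
  obtain ⟨m, rfl⟩ : ∃ m, n = m + 1 := ⟨n - 1, by omega⟩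
  have hm : 2 ≤ m := by omega
  set ρ : Equiv.Perm (Fin (m+1)) := (Equiv.addRight (1 : Fin (m+1))).symm with hρ
  rw [← simplexIntegral_comp_perm m ρ
    (fun u => (∏ s, u s ^ (k - 1)) *
      Φ (∑ s : Fin (m+1), u s * Real.cos (π / (2 * ((m+1 : ℕ) : ℝ))
        - (2 * ((s : ℝ) + 1) - 1) * π / ((m+1 : ℕ) : ℝ))))]
  congr 1
  funext v
  congr 1
  · exact (Equiv.prod_comp ρ fun t => v t ^ (k - 1)).symm
  · congr 1
    refine Fintype.sum_equiv ρ.symm _ _ fun t => ?_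
    have h1 : ρ (ρ.symm t) = t := ρ.apply_symm_apply t
    have h2 : ρ.symm t = t + 1 := rfl
    rw [Function.comp_apply, h1, h2, cos_shift m hm t]
end

section
/- Let n ≥ 1 be an integer, y > 0, and X a real number with |X| < √(1+y). Then ∫_0^∞ v^{(n−1)/2} e^{−(1+y)v} (Σ_{N≥0} [Γ((N+n)/2)/N!] (2X)^N v^{N/2}) dv = √π · 2^{1−n} · Γ(n) · (1+y)^{−(n+1)/2} · (1 − X/√(1+y))^{−n}. -/
open Real MeasureTheory

lemma keyAlg (k N : ℕ) {a : ℝ} (ha : 0 < a) (x : ℝ) :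
    Real.Gamma (((N : ℝ) + (k + 1 : ℕ)) / 2) / (Nat.factorial N : ℝ) * (2 * x) ^ N *
      ((1 / a) ^ (((N : ℝ) + (k + 1 : ℕ) + 1) / 2) * Real.Gamma (((N : ℝ) + (k + 1 : ℕ) + 1) / 2)) =
    Real.sqrt π * (2 : ℝ) ^ ((1 : ℝ) - (k + 1 : ℕ)) * Real.Gamma (k + 1 : ℕ) *
        a ^ (-(((k + 1 : ℕ) : ℝ) + 1) / 2) *
      (((N + k).choose k : ℝ) * (x / Real.sqrt a) ^ N) := by
  have hdup := Real.Gamma_mul_Gamma_add_half (((N : ℝ) + (k + 1 : ℕ)) / 2)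
  have h1 : ((N : ℝ) + (k + 1 : ℕ)) / 2 + 1 / 2 = ((N : ℝ) + (k + 1 : ℕ) + 1) / 2 := by
    push_cast; ring
  have h2 : 2 * (((N : ℝ) + (k + 1 : ℕ)) / 2) = ((N + k : ℕ) : ℝ) + 1 := by push_cast; ring
  rw [h1, h2, Real.Gamma_nat_eq_factorial] at hdup
  have hfac : ((N + k).factorial : ℝ) = ((N + k).choose k : ℝ) * N.factorial * k.factorial := by
    have := Nat.choose_mul_factorial_mul_factorial (Nat.le_add_left k N)
    rw [Nat.add_sub_cancel] at this
    push_cast [← this]; ring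
  have hpow2 : (2 : ℝ) ^ ((1 : ℝ) - (((N + k : ℕ) : ℝ) + 1)) =
      (2 : ℝ) ^ ((1 : ℝ) - ((k + 1 : ℕ) : ℝ)) * ((2 : ℝ) ^ N)⁻¹ := by
    rw [← Real.rpow_natCast 2 N, ← Real.rpow_neg two_pos.le, ← Real.rpow_add two_pos]
    push_cast; ring_nf
  rw [hfac, hpow2] at hdup
  have hG : Real.Gamma ((k + 1 : ℕ) : ℝ) = k.factorial := by
    push_cast; exact Real.Gamma_nat_eq_factorial k
  have hA : (1 / a) ^ (((N : ℝ) + (k + 1 : ℕ) + 1) / 2) =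
      a ^ (-(((k + 1 : ℕ) : ℝ) + 1) / 2) * ((Real.sqrt a) ^ N)⁻¹ := by
    rw [Real.sqrt_eq_rpow, ← Real.rpow_natCast (a ^ (1/2 : ℝ)) N, ← Real.rpow_mul ha.le,
      one_div, ← Real.rpow_neg ha.le, ← Real.rpow_neg_one a, ← Real.rpow_mul ha.le,
      ← Real.rpow_add ha]
    congr 1; push_cast; ring
  have hN : (N.factorial : ℝ) ≠ 0 := by positivity
  have h2N : ((2 : ℝ) ^ N) ≠ 0 := by positivity
  have hsa : ((Real.sqrt a) ^ N) ≠ 0 := by positivity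
  calc Real.Gamma (((N : ℝ) + (k + 1 : ℕ)) / 2) / (Nat.factorial N : ℝ) * (2 * x) ^ N *
      ((1 / a) ^ (((N : ℝ) + (k + 1 : ℕ) + 1) / 2) * Real.Gamma (((N : ℝ) + (k + 1 : ℕ) + 1) / 2))
      = (Real.Gamma (((N : ℝ) + (k + 1 : ℕ)) / 2) * Real.Gamma (((N : ℝ) + (k + 1 : ℕ) + 1) / 2)) *
        ((2 * x) ^ N / (Nat.factorial N : ℝ) *
          (a ^ (-(((k + 1 : ℕ) : ℝ) + 1) / 2) * ((Real.sqrt a) ^ N)⁻¹)) := by rw [hA]; ring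
    _ = (((N + k).choose k : ℝ) * N.factorial * k.factorial *
          ((2 : ℝ) ^ ((1 : ℝ) - ((k + 1 : ℕ) : ℝ)) * ((2 : ℝ) ^ N)⁻¹) * √π) *
        ((2 * x) ^ N / (Nat.factorial N : ℝ) *
          (a ^ (-(((k + 1 : ℕ) : ℝ) + 1) / 2) * ((Real.sqrt a) ^ N)⁻¹)) := by rw [hdup]
    _ = Real.sqrt π * (2 : ℝ) ^ ((1 : ℝ) - (k + 1 : ℕ)) * Real.Gamma (k + 1 : ℕ) *
        a ^ (-(((k + 1 : ℕ) : ℝ) + 1) / 2) *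
        (((N + k).choose k : ℝ) * (x / Real.sqrt a) ^ N) := by
        rw [hG, mul_pow, div_pow]
        field_simp

theorem stmt14 (n : ℕ) (hn : 1 ≤ n) (y : ℝ) (hy : 0 < y) (X : ℝ)
    (hX : |X| < Real.sqrt (1 + y)) :
    ∫ v in Set.Ioi (0 : ℝ), v ^ (((n : ℝ) - 1) / 2) * Real.exp (-(1 + y) * v) *
        ∑' N : ℕ, Real.Gamma (((N : ℝ) + n) / 2) / (Nat.factorial N : ℝ) * (2 * X) ^ N *
          v ^ ((N : ℝ) / 2) =
      Real.sqrt π * (2 : ℝ) ^ ((1 : ℝ) - n) * Real.Gamma n * (1 + y) ^ (-((n : ℝ) + 1) / 2) *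
        (1 - X / Real.sqrt (1 + y)) ^ (-(n : ℝ)) := by
  obtain ⟨k, rfl⟩ : ∃ k, n = k + 1 := ⟨n - 1, (Nat.succ_pred_eq_of_pos hn).symm⟩
  have ha : (0 : ℝ) < 1 + y := by linarith
  have hsa : 0 < Real.sqrt (1 + y) := Real.sqrt_pos.mpr ha
  set t : ℝ := X / Real.sqrt (1 + y) with htdef
  have ht : |t| < 1 := by
    rw [htdef, abs_div, abs_of_pos hsa]; exact (div_lt_one hsa).mpr hX
  have h1t : 0 < 1 - t := by have := (abs_lt.mp ht).2; linarith
  set C : ℝ := Real.sqrt π * (2 : ℝ) ^ ((1 : ℝ) - (k + 1 : ℕ)) * Real.Gamma (k + 1 : ℕ) *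
      (1 + y) ^ (-(((k + 1 : ℕ) : ℝ) + 1) / 2) with hC
  set F : ℕ → ℝ → ℝ := fun N v =>
    Real.Gamma (((N : ℝ) + (k + 1 : ℕ)) / 2) / (Nat.factorial N : ℝ) * (2 * X) ^ N *
      (v ^ (((N : ℝ) + (k + 1 : ℕ) + 1) / 2 - 1) * Real.exp (-((1 + y) * v))) with hF
  have hexp : ∀ N : ℕ, (0 : ℝ) < ((N : ℝ) + (k + 1 : ℕ) + 1) / 2 := fun N => by positivity
  have hint : ∀ N, IntegrableOn (F N) (Set.Ioi 0) := by
    intro N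
    apply Integrable.const_mul
    have h := integrableOn_rpow_mul_exp_neg_mul_rpow (p := 1)
      (s := ((N : ℝ) + (k + 1 : ℕ) + 1) / 2 - 1) (b := 1 + y) (by linarith [hexp N]) one_pos ha
    simp only [Real.rpow_one, neg_mul] at h
    exact h
  have hval : ∀ N, ∫ v in Set.Ioi 0, F N v = C * (((N + k).choose k : ℝ) * t ^ N) := by
    intro N
    rw [hF]
    simp only []
    rw [MeasureTheory.integral_const_mul, integral_rpow_mul_exp_neg_mul_Ioi (hexp N) ha]
    exact keyAlg k N ha X
  have hnorm : ∀ N, (∫ v in Set.Ioi 0, ‖F N v‖) =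
      C * (((N + k).choose k : ℝ) * |t| ^ N) := by
    intro N
    have hpt : ∀ v ∈ Set.Ioi (0 : ℝ), ‖F N v‖ =
        Real.Gamma (((N : ℝ) + (k + 1 : ℕ)) / 2) / (Nat.factorial N : ℝ) * (2 * |X|) ^ N *
          (v ^ (((N : ℝ) + (k + 1 : ℕ) + 1) / 2 - 1) * Real.exp (-((1 + y) * v))) := by
      intro v hv
      have hv' : (0 : ℝ) < v := hv
      have hG : 0 < Real.Gamma (((N : ℝ) + (k + 1 : ℕ)) / 2) :=
        Real.Gamma_pos_of_pos (by positivity)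
      rw [hF]
      simp only [Real.norm_eq_abs, abs_mul, Real.abs_exp, abs_pow, abs_div,
        Nat.abs_cast, abs_of_pos hG, Real.abs_rpow_of_nonneg hv'.le, abs_of_pos hv', abs_two]
    rw [setIntegral_congr_fun measurableSet_Ioi hpt, MeasureTheory.integral_const_mul,
      integral_rpow_mul_exp_neg_mul_Ioi (hexp N) ha]
    have h := keyAlg k N ha |X|
    rwa [show |X| / Real.sqrt (1 + y) = |t| by rw [htdef, abs_div, abs_of_pos hsa]] at h
  have hsum : Summable fun N => ∫ v in Set.Ioi 0, ‖F N v‖ := by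
    simp only [hnorm]
    apply Summable.mul_left
    exact summable_choose_mul_geometric_of_norm_lt_one k
      (by rwa [Real.norm_eq_abs, abs_abs])
  have hswap := MeasureTheory.integral_tsum_of_summable_integral_norm hint hsum
  have hLHS : (∫ v in Set.Ioi (0 : ℝ), v ^ ((((k + 1 : ℕ) : ℝ) - 1) / 2) *
      Real.exp (-(1 + y) * v) *
        ∑' N : ℕ, Real.Gamma (((N : ℝ) + (k + 1 : ℕ)) / 2) / (Nat.factorial N : ℝ) *
          (2 * X) ^ N * v ^ ((N : ℝ) / 2)) = ∫ v in Set.Ioi 0, ∑' N, F N v := by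
    refine setIntegral_congr_fun measurableSet_Ioi fun v hv => ?_
    have hv' : (0 : ℝ) < v := hv
    rw [← tsum_mul_left]
    refine tsum_congr fun N => ?_
    rw [hF]
    simp only []
    have hrp : v ^ ((((k + 1 : ℕ) : ℝ) - 1) / 2) * v ^ ((N : ℝ) / 2) =
        v ^ (((N : ℝ) + (k + 1 : ℕ) + 1) / 2 - 1) := by
      rw [← Real.rpow_add hv']
      congr 1
      push_cast; ring
    rw [neg_mul, ← hrp]
    ring
  rw [hLHS, ← hswap]
  simp only [hval]
  rw [tsum_mul_left, tsum_choose_mul_geometric_of_norm_lt_one k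
    (by rwa [Real.norm_eq_abs] : ‖t‖ < 1)]
  have hpow : (1 - t) ^ (-(((k + 1 : ℕ)) : ℝ)) = 1 / (1 - t) ^ (k + 1) := by
    rw [one_div, ← Real.rpow_natCast (1 - t) (k + 1), ← Real.rpow_neg h1t.le]
  rw [hpow]
end
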